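/- Let V be the three-element poset {a,b,c} with a < b, a < c, and b, c incomparable, and let V(n) := V × [n] be the product of V with the n-element chain, equipped with the product order. Then the map sending each linear extension (p_1,…,p_{3n}) of V(n) (a list of all 3n elements of V(n), each appearing once, such that p_i ≤ p_j in V(n) implies i ≤ j) to the word (ℓ(p_1),…,ℓ(p_{3n})), where ℓ(x,k) equals A, B, or C according to whether x = a, b, or c, is a bijection from the set of linear extensions of V(n) onto the set of Kreweras words of length 3n. -/

import Mathlib

/-- The three letters of a Kreweras word. -/
inductive KLetter : Type
  | A | B | C
deriving DecidableEq, Repr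

open KLetter

/-- `w` is a Kreweras word of length `3 * n`: it has `n` `A`'s, `n` `B`'s, `n` `C`'s,
and every prefix has at least as many `A`'s as `B`'s and at least as many `A`'s as `C`'s. -/
def IsKrewerasWord (n : ℕ) (w : List KLetter) : Prop :=
  w.length = 3 * n ∧ w.count A = n ∧ w.count B = n ∧ w.count C = n ∧
  ∀ k : ℕ, (w.take k).count B ≤ (w.take k).count A ∧
           (w.take k).count C ≤ (w.take k).count A

/-- `kiota w` is the smallest index `ι ≥ 1` (1-indexed) such that the prefix of
length `ι` of `w` has equally many `A`'s as `B`'s, or equally many `A`'s as `C`'s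
(and `0` if no such index exists). -/
def kiota (w : List KLetter) : ℕ :=
  (((List.range (w.length + 1)).filter fun k =>
      decide (1 ≤ k) &&
      (((w.take k).count A == (w.take k).count B) ||
       ((w.take k).count A == (w.take k).count C))).headD 0)

/-- Promotion of a Kreweras word:
`pro w = (w₂, …, w_{ι-1}, A, w_{ι+1}, …, w_{3n}, w_ι)` where `ι = kiota w`. -/
def pro (w : List KLetter) : List KLetter :=
  ((w.drop 1).set (kiota w - 2) A) ++ [w.getD (kiota w - 1) A]

/-- The trip permutation `σ_w` of a Kreweras word of length `3 * n`, as a function on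
1-indexed positions: `σ_w i` is the unique element of `{1, …, 3n}` congruent to
`kiota (pro^[i-1] w) + i - 1` modulo `3 * n`. -/
def ksigma (n : ℕ) (w : List KLetter) (i : ℕ) : ℕ :=
  (kiota (pro^[i - 1] w) + i - 2) % (3 * n) + 1

/-- `keps w i` is the letter of `pro^[i-1] w` in (1-indexed) position `kiota (pro^[i-1] w)`. -/
def keps (w : List KLetter) (i : ℕ) : KLetter :=
  (pro^[i - 1] w).getD (kiota (pro^[i - 1] w) - 1) A

/-- The negation swapping `B` and `C` (and fixing `A`). -/
def negL : KLetter → KLetter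
  | A => A
  | B => C
  | C => B

open Classical in
/-- The involution `τ_i` on Kreweras words of length `3 * n`: swap the letters in
(1-indexed) positions `i` and `i + 1` if the result is again a Kreweras word,
and otherwise do nothing. -/
noncomputable def tau (n i : ℕ) (w : List KLetter) : List KLetter :=
  let w' := (w.set (i - 1) (w.getD i A)).set i (w.getD (i - 1) A)
  if IsKrewerasWord n w' then w' else w

/-- `tauDown n j = τ_j ∘ τ_{j-1} ∘ ⋯ ∘ τ_1`. -/
noncomputable def tauDown (n : ℕ) : ℕ → List KLetter → List KLetter
  | 0, w => w
  | j + 1, w => tau n (j + 1) (tauDown n j w)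

/-- `evacAux n j = (tauDown n 1) ∘ (tauDown n 2) ∘ ⋯ ∘ (tauDown n j)`. -/
noncomputable def evacAux (n : ℕ) : ℕ → List KLetter → List KLetter
  | 0, w => w
  | j + 1, w => evacAux n j (tauDown n (j + 1) w)

/-- Evacuation on Kreweras words of length `3 * n`:
`evac = (τ_1) ∘ (τ_2 ∘ τ_1) ∘ ⋯ ∘ (τ_{3n-1} ∘ ⋯ ∘ τ_2 ∘ τ_1)`. -/
noncomputable def evac (n : ℕ) (w : List KLetter) : List KLetter :=
  evacAux n (3 * n - 1) w

/-- `tauAsc n k c = τ_{k+c-1} ∘ ⋯ ∘ τ_{k+1} ∘ τ_k`. -/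
noncomputable def tauAsc (n k : ℕ) : ℕ → List KLetter → List KLetter
  | 0, w => w
  | j + 1, w => tau n (k + j) (tauAsc n k j w)

/-- `evacStarAux n j = (tauAsc n 1 (3n-1)) ∘ (tauAsc n 2 (3n-2)) ∘ ⋯ ∘ (tauAsc n j (3n-j))`. -/
noncomputable def evacStarAux (n : ℕ) : ℕ → List KLetter → List KLetter
  | 0, w => w
  | j + 1, w => evacStarAux n j (tauAsc n (j + 1) (3 * n - (j + 1)) w)

/-- Dual evacuation on Kreweras words of length `3 * n`:
`evac* = (τ_{3n-1} ∘ ⋯ ∘ τ_1) ∘ (τ_{3n-1} ∘ ⋯ ∘ τ_2) ∘ ⋯ ∘ (τ_{3n-1})`. -/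
noncomputable def evacStar (n : ℕ) (w : List KLetter) : List KLetter :=
  evacStarAux n (3 * n - 1) w

/-- The three-element "V"-shaped poset: `a < b`, `a < c`, with `b`, `c` incomparable. -/
inductive VP : Type
  | a | b | c
deriving DecidableEq

instance : PartialOrder VP where
  le x y := x = y ∨ x = VP.a
  le_refl x := Or.inl rfl
  le_trans x y z hxy hyz := by
    rcases hxy with rfl | rfl
    · exact hyz
    · exact Or.inr rfl
  le_antisymm x y hxy hyx := by
    rcases hxy with rfl | rfl
    · rfl
    · rcases hyx with rfl | rfl <;> rfl

/-- The labeling of elements of `V(n) = VP × Fin n` by letters. -/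
def vlabel {n : ℕ} (p : VP × Fin n) : KLetter :=
  match p.1 with
  | VP.a => A
  | VP.b => B
  | VP.c => C

/-- `L` is a linear extension of `V(n) = VP × Fin n` (with the product order):
a list of all elements of `V(n)`, each appearing once, such that `L_i ≤ L_j`
implies `i ≤ j`. -/
def IsLinearExtension (n : ℕ) (L : List (VP × Fin n)) : Prop :=
  L.Nodup ∧ (∀ p : VP × Fin n, p ∈ L) ∧
  ∀ i j : Fin L.length, L.get i ≤ L.get j → (i : ℕ) ≤ (j : ℕ)

/-- A connected Kreweras word: a Kreweras word of length `3 * n` having no proper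
nonempty consecutive substring which is itself a Kreweras word. -/
def ConnectedKrewerasWord (n : ℕ) (w : List KLetter) : Prop :=
  IsKrewerasWord n w ∧
  ∀ (u : List KLetter) (m : ℕ), u <:+: w → u ≠ [] → u ≠ w → ¬ IsKrewerasWord m u

section KrewerasAux

open KLetter

def letterOf : VP → KLetter
  | VP.a => A
  | VP.b => B
  | VP.c => C

def toVP : KLetter → VP
  | A => VP.a
  | B => VP.b
  | C => VP.c

lemma toVP_letterOf (x : VP) : toVP (letterOf x) = x := by cases x <;> rfl

lemma letterOf_toVP (y : KLetter) : letterOf (toVP y) = y := by cases y <;> rfl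

lemma vlabel_eq {n : ℕ} (p : VP × Fin n) : vlabel p = letterOf p.1 := by
  obtain ⟨x, i⟩ := p; cases x <;> rfl

instance : Fintype VP :=
  ⟨{VP.a, VP.b, VP.c}, by intro x; cases x <;> decide⟩

lemma card_VP : Fintype.card VP = 3 := rfl

lemma VP.le_iff (x y : VP) : x ≤ y ↔ (x = y ∨ x = VP.a) := Iff.rfl

/-- The inverse map: recover the linear extension from a Kreweras word. -/
def decode (n : ℕ) (w : List KLetter) : List (VP × Fin n) :=
  if h : 0 < n then
    (List.range w.length).map fun i =>
      (toVP (w.getD i A), ⟨(w.take i).count (w.getD i A) % n, Nat.mod_lt _ h⟩)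
  else []

lemma length_decode {n : ℕ} (hn : 0 < n) (w : List KLetter) :
    (decode n w).length = w.length := by
  unfold decode; rw [dif_pos hn]; simp

lemma decode_eq {n : ℕ} (hn : 0 < n) (w : List KLetter) :
    decode n w = (List.range w.length).map fun i =>
      (toVP (w.getD i A), (⟨(w.take i).count (w.getD i A) % n, Nat.mod_lt _ hn⟩ : Fin n)) := by
  unfold decode; rw [dif_pos hn]

lemma getElem_decode {n : ℕ} (hn : 0 < n) {w : List KLetter} {i : ℕ}
    (h : i < (decode n w).length) :
    (decode n w)[i] =
      (toVP (w.getD i A),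
        (⟨(w.take i).count (w.getD i A) % n, Nat.mod_lt _ hn⟩ : Fin n)) := by
  have hi : i < w.length := by
    have := h; rwa [length_decode hn] at this
  simp only [decode_eq hn, List.getElem_map, List.getElem_range]

lemma count_map_vlabel {n : ℕ} (l : List (VP × Fin n)) (hl : l.Nodup) (x : VP) :
    (l.map vlabel).count (letterOf x) =
      (Finset.univ.filter fun t : Fin n => (x, t) ∈ l).card := by
  classical
  have hpred : ((fun y => y == letterOf x) ∘ vlabel)
      = fun p : VP × Fin n => decide (p.1 = x) := by
    funext p
    simp only [Function.comp, vlabel_eq]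
    by_cases h : p.1 = x
    · simp [h]
    · have hne : letterOf p.1 ≠ letterOf x := fun he => h (by
        rw [← toVP_letterOf p.1, he, toVP_letterOf])
      simp [h, hne]
  have hcard : (l.filter fun p : VP × Fin n => decide (p.1 = x)).toFinset
      = l.toFinset.filter (fun p => p.1 = x) := by
    rw [List.toFinset_filter]
    simp
  rw [List.count_eq_countP, List.countP_map, hpred,
    List.countP_eq_length_filter, ← List.toFinset_card_of_nodup (hl.filter _), hcard]
  refine Finset.card_bij' (fun p _ => p.2) (fun t _ => (x, t)) ?_ ?_ ?_ ?_
  · intro p hp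
    simp only [Finset.mem_filter, List.mem_toFinset] at hp
    simp only [Finset.mem_filter, Finset.mem_univ, true_and]
    obtain ⟨p1, p2⟩ := p
    obtain ⟨h1, h2⟩ := hp
    simp only at h2
    rw [h2] at h1 ⊢
    exact h1
  · intro t ht
    simp only [Finset.mem_filter, Finset.mem_univ, true_and] at ht
    simp [ht]
  · intro p hp
    simp only [Finset.mem_filter, List.mem_toFinset] at hp
    obtain ⟨p1, p2⟩ := p
    simp only at hp ⊢
    rw [hp.2]
  · intro t ht; rfl

lemma exists_occ (w : List KLetter) (x : KLetter) :
    ∀ i : ℕ, i < w.count x →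
      ∃ j, j < w.length ∧ w.getD j A = x ∧ (w.take j).count x = i := by
  induction w with
  | nil => intro i h; simp at h
  | cons y ws ih =>
    intro i h
    by_cases hyx : y = x
    · subst hyx
      cases i with
      | zero => exact ⟨0, by simp, rfl, by simp⟩
      | succ i' =>
        rw [List.count_cons_self] at h
        obtain ⟨j, hj, hx, hc⟩ := ih i' (by omega)
        refine ⟨j + 1, by simpa using hj, by simpa using hx, ?_⟩
        rw [List.take_succ_cons, List.count_cons_self, hc]
    · rw [List.count_cons_of_ne hyx ] at h
      obtain ⟨j, hj, hx, hc⟩ := ih i h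
      refine ⟨j + 1, by simpa using hj, by simpa using hx, ?_⟩
      rw [List.take_succ_cons, List.count_cons_of_ne hyx, hc]

lemma mem_take_of_le {n : ℕ} {L : List (VP × Fin n)} (hL : IsLinearExtension n L)
    {p q : VP × Fin n} (hpq : p ≤ q) {k : ℕ} (hq : q ∈ L.take k) : p ∈ L.take k := by
  obtain ⟨hnd, hmem, hord⟩ := hL
  obtain ⟨j, hj, hjq⟩ := List.mem_iff_getElem.1 hq
  rw [List.length_take] at hj
  have hjlen : j < L.length := lt_of_lt_of_le hj (min_le_right _ _)
  have hjk : j < k := lt_of_lt_of_le hj (min_le_left _ _)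
  rw [List.getElem_take] at hjq
  obtain ⟨j', hj', hj'p⟩ := List.mem_iff_getElem.1 (hmem p)
  have hle : j' ≤ j := by
    have := hord ⟨j', hj'⟩ ⟨j, hjlen⟩ (by
      rw [List.get_eq_getElem, List.get_eq_getElem, hj'p, hjq]; exact hpq)
    simpa using this
  refine List.mem_iff_getElem.2 ⟨j', ?_, ?_⟩
  · rw [List.length_take]; omega
  · rw [List.getElem_take]; exact hj'p

lemma toFinset_eq_univ {n : ℕ} {L : List (VP × Fin n)} (hL : IsLinearExtension n L) :
    L.toFinset = Finset.univ := by
  ext p; simp [hL.2.1 p]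

lemma length_linext {n : ℕ} {L : List (VP × Fin n)} (hL : IsLinearExtension n L) :
    L.length = 3 * n := by
  have h := List.toFinset_card_of_nodup hL.1
  rw [toFinset_eq_univ hL, Finset.card_univ, Fintype.card_prod, card_VP,
    Fintype.card_fin] at h
  omega

lemma count_full {n : ℕ} {L : List (VP × Fin n)} (hL : IsLinearExtension n L) (x : VP) :
    (L.map vlabel).count (letterOf x) = n := by
  classical
  rw [count_map_vlabel L hL.1 x]
  rw [Finset.filter_true_of_mem (fun t _ => hL.2.1 (x, t))]
  simp

lemma prefix_count_le {n : ℕ} {L : List (VP × Fin n)} (hL : IsLinearExtension n L)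
    (x : VP) (k : ℕ) :
    ((L.map vlabel).take k).count (letterOf x) ≤ ((L.map vlabel).take k).count A := by
  classical
  rw [← List.map_take, count_map_vlabel _ (hL.1.sublist (List.take_sublist _ _)) x]
  rw [show (A : KLetter) = letterOf VP.a from rfl,
    count_map_vlabel _ (hL.1.sublist (List.take_sublist _ _)) VP.a]
  apply Finset.card_le_card
  intro t ht
  simp only [Finset.mem_filter, Finset.mem_univ, true_and] at ht ⊢
  refine mem_take_of_le hL ?_ ht
  exact Prod.le_def.2 ⟨Or.inr rfl, le_refl t⟩

lemma mapsTo_kreweras {n : ℕ} {L : List (VP × Fin n)} (hL : IsLinearExtension n L) :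
    IsKrewerasWord n (L.map vlabel) := by
  refine ⟨by rw [List.length_map]; exact length_linext hL, ?_, ?_, ?_, fun k => ?_⟩
  · exact count_full hL VP.a
  · exact count_full hL VP.b
  · exact count_full hL VP.c
  · exact ⟨prefix_count_le hL VP.b k, prefix_count_le hL VP.c k⟩

lemma decode_map_vlabel {n : ℕ} {L : List (VP × Fin n)} (hL : IsLinearExtension n L) :
    decode n (L.map vlabel) = L := by
  classical
  rcases Nat.eq_zero_or_pos n with hn | hn
  · subst hn
    match L with
    | [] => rfl
    | p :: _ => exact p.2.elim0
  · apply List.ext_getElem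
    · rw [length_decode hn, List.length_map]
    · intro i h1 h2
      rw [getElem_decode hn h1]
      have hilen : i < (L.map vlabel).length := by rwa [List.length_map]
      have hget : (L.map vlabel).getD i A = letterOf (L[i].1) := by
        rw [List.getD_eq_getElem _ _ hilen, List.getElem_map, vlabel_eq]
      have hfil : (Finset.univ.filter fun t : Fin n => (L[i].1, t) ∈ L.take i)
          = Finset.Iio (L[i].2) := by
        ext t
        simp only [Finset.mem_filter, Finset.mem_univ, true_and, Finset.mem_Iio]
        constructor
        · intro ht
          obtain ⟨j, hj, hjq⟩ := List.mem_iff_getElem.1 ht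
          rw [List.length_take] at hj
          have hjlen : j < L.length := lt_of_lt_of_le hj (min_le_right _ _)
          have hji : j < i := lt_of_lt_of_le hj (min_le_left _ _)
          rw [List.getElem_take] at hjq
          by_contra hts
          push_neg at hts
          have hle : L[i] ≤ L[j] := by
            rw [hjq]
            refine Prod.le_def.2 ⟨?_, ?_⟩
            · exact le_refl _
            · exact hts
          have := hL.2.2 ⟨i, h2⟩ ⟨j, hjlen⟩ (by
            rw [List.get_eq_getElem, List.get_eq_getElem]; exact hle)
          simp only at this
          omega
        · intro ht
          obtain ⟨j', hj', hj'p⟩ := List.mem_iff_getElem.1 (hL.2.1 (L[i].1, t))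
          have hle : j' ≤ i := by
            have := hL.2.2 ⟨j', hj'⟩ ⟨i, h2⟩ (by
              rw [List.get_eq_getElem, List.get_eq_getElem, hj'p]
              exact Prod.le_def.2 ⟨Or.inl rfl, le_of_lt ht⟩)
            simpa using this
          have hne : j' ≠ i := by
            intro he
            subst he
            have hsnd : L[j'].2 = t := congrArg Prod.snd hj'p
            rw [hsnd] at ht
            exact lt_irrefl _ ht
          refine List.mem_iff_getElem.2 ⟨j', ?_, ?_⟩
          · rw [List.length_take]; omega
          · rw [List.getElem_take]; exact hj'p
      have hcount : ((L.map vlabel).take i).count ((L.map vlabel).getD i A)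
          = (L[i].2 : ℕ) := by
        rw [hget, ← List.map_take,
          count_map_vlabel _ (hL.1.sublist (List.take_sublist _ _)) _, hfil,
          Fin.card_Iio]
      refine Prod.ext ?_ ?_
      · simp only [hget, toVP_letterOf]
      · simp only
        rw [hcount]
        exact Fin.ext (by simp [Nat.mod_eq_of_lt (L[i].2).isLt])

lemma count_take_succ {w : List KLetter} {i : ℕ} (hi : i < w.length) {x : KLetter}
    (hx : w[i] = x) : (w.take (i + 1)).count x = (w.take i).count x + 1 := by
  rw [List.take_succ, List.getElem?_eq_getElem hi, hx]
  simp

lemma count_take_lt_total {n : ℕ} {w : List KLetter} (hw : IsKrewerasWord n w) {i : ℕ}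
    (hi : i < w.length) : (w.take i).count w[i] < n := by
  have h1 : (w.take (i + 1)).count w[i] = (w.take i).count w[i] + 1 :=
    count_take_succ hi rfl
  have h2 : (w.take (i + 1)).count w[i] ≤ w.count w[i] :=
    (List.take_sublist _ _).count_le _
  have h3 : w.count w[i] = n := by
    obtain ⟨_, hA, hB, hC, _⟩ := hw
    cases hww : w[i] <;> simp_all
  omega

lemma count_take_mono {w : List KLetter} {x : KLetter} {j i : ℕ} (hji : j < i)
    (hj : j < w.length) (hx : w[j] = x) :
    (w.take j).count x < (w.take i).count x := by
  have h1 : (w.take (j + 1)).count x = (w.take j).count x + 1 :=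
    count_take_succ hj hx
  have heq : w.take (j + 1) = (w.take i).take (j + 1) := by
    rw [List.take_take, min_eq_left (by omega)]
  have h2 : (w.take (j + 1)).count x ≤ (w.take i).count x := by
    rw [heq]; exact (List.take_sublist _ _).count_le _
  omega

lemma decode_isLinearExtension {n : ℕ} {w : List KLetter} (hw : IsKrewerasWord n w) :
    IsLinearExtension n (decode n w) := by
  classical
  rcases Nat.eq_zero_or_pos n with hn | hn
  · subst hn
    have hw0 : w = [] := by
      have := hw.1; simpa using List.length_eq_zero_iff.1 (by omega)
    subst hw0
    refine ⟨by simp [decode], fun p => p.2.elim0, fun i j _ => ?_⟩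
    exact absurd i.isLt (by simp [decode])
  · have hlen : (decode n w).length = w.length := length_decode hn w
    have hcntlt : ∀ (i : ℕ) (hi : i < w.length), (w.take i).count (w[i]'hi) < n :=
      fun i hi => count_take_lt_total hw hi
    have hget : ∀ (i : ℕ) (h : i < (decode n w).length),
        (decode n w)[i] = (toVP (w[i]'(hlen ▸ h)),
          (⟨(w.take i).count (w[i]'(hlen ▸ h)), hcntlt i (hlen ▸ h)⟩ : Fin n)) := by
      intro i h
      rw [getElem_decode hn h]
      have hi : i < w.length := hlen ▸ h
      have hgd : w.getD i A = w[i]'hi := List.getD_eq_getElem _ _ hi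
      refine Prod.ext (by rw [hgd]) (Fin.ext ?_)
      simp only [hgd]
      exact Nat.mod_eq_of_lt (hcntlt i hi)
    refine ⟨?_, ?_, ?_⟩
    · rw [List.nodup_iff_injective_get]
      intro i j heq
      rw [List.get_eq_getElem, List.get_eq_getElem, hget _ i.isLt, hget _ j.isLt] at heq
      have hi : (i : ℕ) < w.length := hlen ▸ i.isLt
      have hj : (j : ℕ) < w.length := hlen ▸ j.isLt
      have h1 : toVP w[(i:ℕ)] = toVP w[(j:ℕ)] := congrArg Prod.fst heq
      have hxx : w[(i:ℕ)] = w[(j:ℕ)] := by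
        rw [← letterOf_toVP w[(i:ℕ)], ← letterOf_toVP w[(j:ℕ)], h1]
      have h2 : (w.take (i:ℕ)).count w[(i:ℕ)] = (w.take (j:ℕ)).count w[(j:ℕ)] := by
        have := congrArg Prod.snd heq
        simpa [Fin.ext_iff] using this
      rcases lt_trichotomy (i : ℕ) (j : ℕ) with h | h | h
      · exfalso
        have hm := count_take_mono h hi hxx
        rw [hxx] at h2
        omega
      · exact Fin.ext h
      · exfalso
        have hm := count_take_mono h hj hxx.symm
        rw [← hxx] at h2
        omega
    · rintro ⟨x, t⟩
      have hcnt : (t : ℕ) < w.count (letterOf x) := by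
        obtain ⟨_, hA, hB, hC, _⟩ := hw
        cases x <;> simp only [letterOf] <;> omega
      obtain ⟨j, hj, hxj, hcj⟩ := exists_occ w (letterOf x) t hcnt
      have hjd : j < (decode n w).length := hlen ▸ hj
      refine List.mem_iff_getElem.2 ⟨j, hjd, ?_⟩
      rw [hget j hjd]
      have hwj : w[j] = letterOf x := by rwa [List.getD_eq_getElem _ _ hj] at hxj
      refine Prod.ext ?_ (Fin.ext ?_)
      · simp [hwj, toVP_letterOf]
      · simp only [hwj, hcj]
    · intro i j hij
      rw [List.get_eq_getElem, List.get_eq_getElem, hget _ i.isLt, hget _ j.isLt] at hij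
      obtain ⟨hfst0, hsnd0⟩ := Prod.le_def.1 hij
      have hfst : toVP (w[(i:ℕ)]'(hlen ▸ i.isLt)) ≤ toVP (w[(j:ℕ)]'(hlen ▸ j.isLt)) := hfst0
      have hsnd : (w.take (i:ℕ)).count (w[(i:ℕ)]'(hlen ▸ i.isLt))
          ≤ (w.take (j:ℕ)).count (w[(j:ℕ)]'(hlen ▸ j.isLt)) := hsnd0
      have hi : (i : ℕ) < w.length := hlen ▸ i.isLt
      have hj : (j : ℕ) < w.length := hlen ▸ j.isLt
      by_contra hcon
      push_neg at hcon
      have hji : (j : ℕ) < (i : ℕ) := hcon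
      rcases (VP.le_iff _ _).1 hfst with heq | ha
      · -- same letter
        have hxx : w[(i:ℕ)] = w[(j:ℕ)] := by
          rw [← letterOf_toVP w[(i:ℕ)], ← letterOf_toVP w[(j:ℕ)], heq]
        have hm := count_take_mono hji hj hxx.symm
        rw [← hxx] at hsnd
        omega
      · -- w[i] = A
        have hwiA : w[(i:ℕ)] = A := by
          rw [← letterOf_toVP w[(i:ℕ)], ha]; rfl
        by_cases hsame : w[(j:ℕ)] = A
        · have hm := count_take_mono hji hj hsame
          rw [hwiA, hsame] at hsnd
          omega
        · -- w[j] is B or C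
          have hA1 : ((w.take ((j:ℕ)+1)).count A) ≤ (w.take (i:ℕ)).count A := by
            have heq2 : w.take ((j:ℕ)+1) = (w.take (i:ℕ)).take ((j:ℕ)+1) := by
              rw [List.take_take, min_eq_left (by omega)]
            rw [heq2]; exact (List.take_sublist _ _).count_le _
          have hy1 : (w.take ((j:ℕ)+1)).count w[(j:ℕ)]
              = (w.take (j:ℕ)).count w[(j:ℕ)] + 1 :=
            count_take_succ hj rfl
          have hkrew := hw.2.2.2.2 ((j:ℕ)+1)
          have hyA : (w.take ((j:ℕ)+1)).count w[(j:ℕ)]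
              ≤ (w.take ((j:ℕ)+1)).count A := by
            cases hww : w[(j:ℕ)] with
            | A => exact le_refl _
            | B => exact hkrew.1
            | C => exact hkrew.2
          rw [hwiA] at hsnd
          omega

lemma map_vlabel_decode {n : ℕ} {w : List KLetter} (hw : IsKrewerasWord n w) :
    (decode n w).map vlabel = w := by
  rcases Nat.eq_zero_or_pos n with hn | hn
  · subst hn
    have hw0 : w = [] := by
      have := hw.1; exact List.length_eq_zero_iff.1 (by omega)
    subst hw0
    rfl
  · apply List.ext_getElem
    · rw [List.length_map, length_decode hn]
    · intro i h1 h2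
      rw [List.getElem_map, getElem_decode hn (by rwa [List.length_map] at h1)]
      have hi : i < w.length := by rwa [List.length_map, length_decode hn] at h1
      rw [vlabel_eq]
      simp only
      rw [List.getD_eq_getElem _ _ hi, letterOf_toVP]

end KrewerasAux

/-- Removing the subscripts (i.e. applying `vlabel` letterwise) is a bijection from the
set of linear extensions of `V(n) = VP × Fin n` onto the set of Kreweras words of
length `3n`. -/
theorem linear_extension_kreweras_bijection (n : ℕ) :
    Set.BijOn (fun L : List (VP × Fin n) => L.map vlabel)
      {L : List (VP × Fin n) | IsLinearExtension n L}
      {w : List KLetter | IsKrewerasWord n w} := by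
  constructor
  · intro L hL
    exact mapsTo_kreweras hL
  constructor
  · intro L1 h1 L2 h2 he
    simp only at he
    rw [← decode_map_vlabel h1, ← decode_map_vlabel h2, he]
  · intro w hw
    exact ⟨decode n w, decode_isLinearExtension hw, map_vlabel_decode hw⟩
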